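/- Consider the accelerated gradient iteration on a convex differentiable function f: ℝ^n → ℝ with L-Lipschitz gradient: v^k = λ^k + ((k−1)/(k+2))(λ^k − λ^{k−1}), λ^{k+1} = v^k − (1/L)∇f(v^k), initialized with λ^0 = λ^{−1}. If f attains its minimum f* at some λ*, then f(λ^k) − f* ≤ 2L‖λ^0 − λ*‖² / (k+1)² for all k ≥ 1. -/

import Mathlib

open RealInnerProductSpace

section NestAux

variable {E : Type*} [NormedAddCommGroup E] [InnerProductSpace ℝ E] [CompleteSpace E]

lemma nest_lineDeriv (f : E → ℝ) (f' : E → E) (hgrad : ∀ x, HasGradientAt f (f' x) x)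
    (x y : E) (t : ℝ) :
    HasDerivAt (fun s : ℝ => f (x + s • (y - x))) ⟪f' (x + t • (y - x)), y - x⟫ t := by
  have hc : HasDerivAt (fun s : ℝ => x + s • (y - x)) (y - x) t := by
    simpa using ((hasDerivAt_id t).smul_const (y - x)).const_add x
  have h1 := (hgrad (x + t • (y - x))).hasFDerivAt.comp_hasDerivAt t hc
  simpa [InnerProductSpace.toDual_apply_apply, Function.comp_def] using h1

lemma nest_tangent (f : E → ℝ) (f' : E → E) (hconv : ConvexOn ℝ Set.univ f)
    (hgrad : ∀ x, HasGradientAt f (f' x) x) (x y : E) :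
    f x + ⟪f' x, y - x⟫ ≤ f y := by
  have hφ := nest_lineDeriv f f' hgrad x y
  have hφc : ConvexOn ℝ Set.univ (fun s : ℝ => f (x + s • (y - x))) := by
    have := hconv.comp_affineMap
      (AffineMap.const ℝ ℝ x + (LinearMap.toAffineMap (LinearMap.toSpanSingleton ℝ E (y - x))))
    simpa [Function.comp_def] using this
  have h := hφc.le_slope_of_hasDerivAt (Set.mem_univ (0:ℝ)) (Set.mem_univ (1:ℝ))
    one_pos (by simpa using hφ 0)
  rw [slope_def_field] at h
  simp only [zero_smul, add_zero, one_smul, div_one, sub_zero] at h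
  have : x + (y - x) = y := by abel
  rw [this] at h
  linarith

lemma nest_descent (f : E → ℝ) (f' : E → E) (hgrad : ∀ x, HasGradientAt f (f' x) x)
    (L : ℝ) (hL : 0 < L) (hlip : LipschitzWith (Real.toNNReal L) f') (x y : E) :
    f y ≤ f x + ⟪f' x, y - x⟫ + L / 2 * ‖y - x‖ ^ 2 := by
  set g : ℝ → ℝ := fun t => f (x + t • (y - x)) - t * ⟪f' x, y - x⟫ - L / 2 * t ^ 2 * ‖y - x‖ ^ 2
    with hg
  have hg' : ∀ t : ℝ, HasDerivAt g
      (⟪f' (x + t • (y - x)), y - x⟫ - ⟪f' x, y - x⟫ - L * t * ‖y - x‖ ^ 2) t := by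
    intro t
    have h1 := nest_lineDeriv f f' hgrad x y t
    have h2 : HasDerivAt (fun t : ℝ => t * ⟪f' x, y - x⟫) ⟪f' x, y - x⟫ t := by
      simpa using (hasDerivAt_id t).mul_const _
    have h3 : HasDerivAt (fun t : ℝ => L / 2 * t ^ 2 * ‖y - x‖ ^ 2)
        (L * t * ‖y - x‖ ^ 2) t := by
      have := ((hasDerivAt_pow 2 t).const_mul (L / 2)).mul_const (‖y - x‖ ^ 2)
      exact this.congr_deriv (by ring)
    exact (h1.sub h2).sub h3
  have hmono : AntitoneOn g (Set.Icc 0 1) := by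
    apply antitoneOn_of_deriv_nonpos (convex_Icc 0 1)
    · exact fun t _ => ((hg' t).continuousAt).continuousWithinAt
    · exact fun t _ => ((hg' t).differentiableAt).differentiableWithinAt
    · intro t ht
      rw [interior_Icc] at ht
      rw [(hg' t).deriv]
      have hb : ⟪f' (x + t • (y - x)) - f' x, y - x⟫ ≤ L * t * ‖y - x‖ ^ 2 := by
        calc ⟪f' (x + t • (y - x)) - f' x, y - x⟫ ≤ ‖f' (x + t • (y - x)) - f' x‖ * ‖y - x‖ :=
              real_inner_le_norm _ _
          _ ≤ (L * ‖(x + t • (y - x)) - x‖) * ‖y - x‖ := by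
              apply mul_le_mul_of_nonneg_right _ (norm_nonneg _)
              have := hlip.dist_le_mul (x + t • (y - x)) x
              rw [Real.coe_toNNReal L hL.le] at this
              simpa [dist_eq_norm] using this
          _ = L * t * ‖y - x‖ ^ 2 := by
              have : (x + t • (y - x)) - x = t • (y - x) := by abel
              rw [this, norm_smul, Real.norm_eq_abs, abs_of_pos ht.1]
              ring
      rw [inner_sub_left] at hb
      linarith
  have h01 := hmono (Set.left_mem_Icc.2 zero_le_one) (Set.right_mem_Icc.2 zero_le_one) zero_le_one
  have hg0 : g 0 = f x := by simp [hg]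
  have hg1 : g 1 = f y - ⟪f' x, y - x⟫ - L / 2 * ‖y - x‖ ^ 2 := by
    have h : x + (1:ℝ) • (y - x) = y := by rw [one_smul]; abel
    simp [hg, h]
  rw [hg0, hg1] at h01
  linarith

lemma nest_gradstep (f : E → ℝ) (f' : E → E) (hconv : ConvexOn ℝ Set.univ f)
    (hgrad : ∀ x, HasGradientAt f (f' x) x)
    (L : ℝ) (hL : 0 < L) (hlip : LipschitzWith (Real.toNNReal L) f')
    (y p x : E) (hp : p = y - (1 / L) • f' y) :
    f p - f x ≤ L * ⟪y - p, y - x⟫ - L / 2 * ‖y - p‖ ^ 2 := by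
  have hyp : y - p = (1 / L) • f' y := by rw [hp]; abel
  have hfy : f' y = L • (y - p) := by
    rw [hyp, smul_smul, mul_one_div, div_self hL.ne', one_smul]
  have h1 := nest_descent f f' hgrad L hL hlip y p
  have h2 := nest_tangent f f' hconv hgrad y x
  have e1 : ⟪f' y, p - y⟫ = L * ⟪y - p, p - y⟫ := by rw [hfy, real_inner_smul_left]
  have e2 : ⟪f' y, x - y⟫ = L * ⟪y - p, x - y⟫ := by rw [hfy, real_inner_smul_left]
  have e3 : ⟪y - p, p - y⟫ = -‖y - p‖ ^ 2 := by
    have : p - y = -(y - p) := by abel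
    rw [this, inner_neg_right, real_inner_self_eq_norm_sq]
  have e4 : ⟪y - p, x - y⟫ = -⟪y - p, y - x⟫ := by
    have : x - y = -(y - x) := by abel
    rw [this, inner_neg_right]
  have e5 : ‖p - y‖ = ‖y - p‖ := norm_sub_rev _ _
  rw [e1, e3] at h1
  rw [e2, e4] at h2
  rw [e5] at h1
  nlinarith [sq_nonneg ‖y - p‖]

omit [CompleteSpace E] in
lemma nest_key_id (a b : E) :
    ⟪a - b, a⟫ - 1 / 2 * ‖a - b‖ ^ 2 = 1 / 2 * ‖a‖ ^ 2 - 1 / 2 * ‖b‖ ^ 2 := by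
  have h1 : ‖a - b‖ ^ 2 = ‖a‖ ^ 2 - 2 * ⟪a, b⟫ + ‖b‖ ^ 2 := norm_sub_sq_real a b
  have h2 : ⟪a - b, a⟫ = ‖a‖ ^ 2 - ⟪b, a⟫ := by
    rw [inner_sub_left, real_inner_self_eq_norm_sq]
  rw [h2, h1, real_inner_comm b a]
  ring

omit [CompleteSpace E] in
lemma nest_step_ineq (L : ℝ) (δ δ' : ℝ)
    (y p x xs : E) (t' : ℝ) (ht' : 1 ≤ t')
    (h1 : δ' - δ ≤ L * ⟪y - p, y - x⟫ - L / 2 * ‖y - p‖ ^ 2)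
    (h2 : δ' ≤ L * ⟪y - p, y - xs⟫ - L / 2 * ‖y - p‖ ^ 2) :
    t' ^ 2 * δ' + L / 2 * ‖t' • p - (t' - 1) • x - xs‖ ^ 2 ≤
      (t' ^ 2 - t') * δ + L / 2 * ‖t' • y - (t' - 1) • x - xs‖ ^ 2 := by
  set a : E := t' • y - (t' - 1) • x - xs with ha
  set b : E := t' • p - (t' - 1) • x - xs with hb
  set q : E := y - p with hq
  have hab : a - b = t' • q := by rw [ha, hb, hq]; module
  have haq : a = (t' - 1) • (y - x) + (y - xs) := by rw [ha]; module
  have e1 : ⟪q, a⟫ = (t' - 1) * ⟪q, y - x⟫ + ⟪q, y - xs⟫ := by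
    rw [haq, inner_add_right, real_inner_smul_right]
  have e2 := nest_key_id a b
  have e3 : ⟪a - b, a⟫ = t' * ⟪q, a⟫ := by rw [hab, real_inner_smul_left]
  have e4 : ‖a - b‖ ^ 2 = t' ^ 2 * ‖q‖ ^ 2 := by
    rw [hab, norm_smul, Real.norm_eq_abs, abs_of_pos (lt_of_lt_of_le one_pos ht')]
    ring
  have c1 : (t' - 1) * (δ' - δ) ≤ (t' - 1) * (L * ⟪q, y - x⟫ - L / 2 * ‖q‖ ^ 2) :=
    mul_le_mul_of_nonneg_left h1 (by linarith)
  have c2 : t' * δ' - (t' - 1) * δ ≤ L * ⟪q, a⟫ - t' * (L / 2 * ‖q‖ ^ 2) := by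
    rw [e1]; nlinarith
  have c3 : t' * (t' * δ' - (t' - 1) * δ) ≤ t' * (L * ⟪q, a⟫ - t' * (L / 2 * ‖q‖ ^ 2)) :=
    mul_le_mul_of_nonneg_left c2 (by linarith)
  have c4 : t' * (L * ⟪q, a⟫ - t' * (L / 2 * ‖q‖ ^ 2)) =
      L * (⟪a - b, a⟫ - 1 / 2 * ‖a - b‖ ^ 2) := by
    rw [e3, e4]; ring
  rw [c4, e2] at c3
  nlinarith

end NestAux

theorem stmt_11 (n : ℕ) (f : EuclideanSpace ℝ (Fin n) → ℝ)
    (f' : EuclideanSpace ℝ (Fin n) → EuclideanSpace ℝ (Fin n))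
    (hconv : ConvexOn ℝ Set.univ f)
    (hgrad : ∀ x, HasGradientAt f (f' x) x)
    (L : ℝ) (hL : 0 < L) (hlip : LipschitzWith (Real.toNNReal L) f')
    (lam v : ℕ → EuclideanSpace ℝ (Fin n))
    (hv : ∀ k : ℕ, v k = lam k + (((k : ℝ) - 1) / ((k : ℝ) + 2)) • (lam k - lam (k - 1)))
    (hrec : ∀ k : ℕ, lam (k + 1) = v k - (1 / L) • f' (v k))
    (lamstar : EuclideanSpace ℝ (Fin n)) (hmin : ∀ x, f lamstar ≤ f x) :
    ∀ k : ℕ, 1 ≤ k →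
      f (lam k) - f lamstar ≤ 2 * L * ‖lam 0 - lamstar‖ ^ 2 / ((k : ℝ) + 1) ^ 2 := by
  set t : ℕ → ℝ := fun k => ((k : ℝ) + 1) / 2 with ht
  set u : ℕ → EuclideanSpace ℝ (Fin n) := fun k => t k • lam k - (t k - 1) • lam (k - 1) - lamstar with hu
  have hδnn : ∀ k : ℕ, 0 ≤ f (lam k) - f lamstar := fun k => sub_nonneg.2 (hmin _)
  have hgs : ∀ (k : ℕ) (x : EuclideanSpace ℝ (Fin n)), f (lam (k + 1)) - f x ≤
      L * ⟪v k - lam (k + 1), v k - x⟫ - L / 2 * ‖v k - lam (k + 1)‖ ^ 2 :=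
    fun k x => nest_gradstep f f' hconv hgrad L hL hlip (v k) (lam (k + 1)) x (hrec k)
  have hv0 : v 0 = lam 0 := by
    rw [hv 0]; norm_num
  -- base case : energy at k = 1
  have hbase : (t 1) ^ 2 * (f (lam 1) - f lamstar) + L / 2 * ‖u 1‖ ^ 2 ≤
      L / 2 * ‖lam 0 - lamstar‖ ^ 2 := by
    have hb := hgs 0 lamstar
    rw [hv0] at hb
    have hkey := nest_key_id (lam 0 - lamstar) (lam 1 - lamstar)
    have hd : lam 0 - lamstar - (lam 1 - lamstar) = lam 0 - lam 1 := by abel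
    rw [hd] at hkey
    have ht1 : t 1 = 1 := by norm_num [ht]
    have hu1 : u 1 = lam 1 - lamstar := by
      rw [hu]; simp only [ht1]; norm_num
    rw [ht1, hu1]
    nlinarith [hkey, hb]
  -- step : energy decreases
  have hstep : ∀ k : ℕ, 1 ≤ k →
      (t (k+1)) ^ 2 * (f (lam (k+1)) - f lamstar) + L / 2 * ‖u (k+1)‖ ^ 2 ≤
      (t k) ^ 2 * (f (lam k) - f lamstar) + L / 2 * ‖u k‖ ^ 2 := by
    intro k hk
    have ht' : 1 ≤ t (k + 1) := by
      rw [ht]; push_cast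
      have : (0:ℝ) ≤ (k:ℝ) := Nat.cast_nonneg k
      linarith
    have h1 : (f (lam (k+1)) - f lamstar) - (f (lam k) - f lamstar) ≤
        L * ⟪v k - lam (k+1), v k - lam k⟫ - L / 2 * ‖v k - lam (k+1)‖ ^ 2 := by
      have := hgs k (lam k); linarith
    have h2 := hgs k lamstar
    have hmain := nest_step_ineq L (f (lam k) - f lamstar) (f (lam (k+1)) - f lamstar)
      (v k) (lam (k+1)) (lam k) lamstar (t (k+1)) ht' h1 h2
    -- identify the two shifted points with u (k+1) and u k
    have hb : t (k+1) • lam (k+1) - (t (k+1) - 1) • lam k - lamstar = u (k+1) := by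
      rw [hu]; simp [Nat.add_sub_cancel]
    have hc : t (k+1) * (((k : ℝ) - 1) / ((k : ℝ) + 2)) = t k - 1 := by
      rw [ht]; push_cast
      have hk2 : ((k : ℝ) + 2) ≠ 0 := by positivity
      field_simp
      ring
    have hyk : t (k+1) • v k - (t (k+1) - 1) • lam k - lamstar = u k := by
      rw [hv k, smul_add, smul_smul, hc, hu]
      module
    rw [hb, hyk] at hmain
    have hcoef : (t (k+1)) ^ 2 - t (k+1) ≤ (t k) ^ 2 := by
      rw [ht]; push_cast; nlinarith [Nat.cast_nonneg (α := ℝ) k]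
    have := mul_le_mul_of_nonneg_right hcoef (hδnn k)
    linarith
  -- energy bounded by initial value
  have hEb : ∀ k : ℕ, 1 ≤ k →
      (t k) ^ 2 * (f (lam k) - f lamstar) + L / 2 * ‖u k‖ ^ 2 ≤
      L / 2 * ‖lam 0 - lamstar‖ ^ 2 := by
    intro k hk
    induction k, hk using Nat.le_induction with
    | base => exact hbase
    | succ m hm ih => exact le_trans (hstep m hm) ih
  intro k hk
  have h1 := hEb k hk
  have h2 : (0:ℝ) ≤ L / 2 * ‖u k‖ ^ 2 := by positivity
  have h3 : (t k) ^ 2 * (f (lam k) - f lamstar) ≤ L / 2 * ‖lam 0 - lamstar‖ ^ 2 := by linarith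
  rw [ht] at h3
  beta_reduce at h3
  have hkpos : (0:ℝ) < ((k : ℝ) + 1) ^ 2 := by positivity
  rw [le_div_iff₀ hkpos]
  nlinarith [h3, hδnn k]
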